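/- Let δ: Ξ → Hom(Λ*Φ, Φ) be k-linear, let δ̂: Hom_k(Λ*Φ, Ξ) → Hom(Λ*Φ, Φ) be its extension δ̂(π) = ev∘(δ∘π ⊗ 1)∘Δ, and suppose there exists C: Ξ⊗Ξ → Hom_k(Λ*Φ, Ξ) with [δ(ξ), δ(η)] = δ̂(C(ξ,η)) for all ξ, η ∈ Ξ (BBvD hypothesis). Define [π₁,π₂] = π₁⊙δ̂(π₂) − π₂⊙δ̂(π₁) + Ĉ(π₁,π₂) on Hom_k(Λ*Φ,Ξ), where Ĉ(π₁,π₂) = C∘((π₁⊗π₂)⊗1)∘(Δ⊗1)∘Δ. Then δ̂ preserves brackets: δ̂([π₁,π₂]) = [δ̂(π₁), δ̂(π₂)] in the Gerstenhaber Lie algebra Hom(Λ*Φ,Φ). -/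

import Mathlib

open TensorProduct

noncomputable section

/-- A *coderivation* on a coalgebra `(C, Δ)`: `Δ ∘ Θ = (Θ ⊗ 1 + 1 ⊗ Θ) ∘ Δ`. -/
def IsCoderivation {A C : Type*} [CommRing A] [AddCommGroup C] [Module A C]
    (Δ : C →ₗ[A] C ⊗[A] C) (Θ : C →ₗ[A] C) : Prop :=
  Δ ∘ₗ Θ = (LinearMap.rTensor C Θ + LinearMap.lTensor C Θ) ∘ₗ Δ

/-- An axiomatization of the cofree nilpotent (graded co)commutative coalgebra `Λ*Φ`
cogenerated by `Φ`, together with its wedge product `m`, unit `one`, counit `ε`,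
inclusion `ι` of the cogenerators and projection `p` onto the cogenerators.
The field `cofree_coder` expresses cofreeness: a coderivation is determined by its
corestriction to the cogenerators. -/
structure WedgeBialgebra (A : Type*) (Φ : Type*) (C : Type*) [CommRing A]
    [AddCommGroup Φ] [Module A Φ] [AddCommGroup C] [Module A C] where
  Δ : C →ₗ[A] C ⊗[A] C
  ε : C →ₗ[A] A
  m : C ⊗[A] C →ₗ[A] C
  one : C
  ι : Φ →ₗ[A] C
  p : C →ₗ[A] Φ
  coassoc : (TensorProduct.assoc A C C C).toLinearMap ∘ₗ (LinearMap.rTensor C Δ) ∘ₗ Δ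
      = (LinearMap.lTensor C Δ) ∘ₗ Δ
  cocomm : (TensorProduct.comm A C C).toLinearMap ∘ₗ Δ = Δ
  counit_left : ∀ x : C, (TensorProduct.lid A C) ((LinearMap.rTensor C ε) (Δ x)) = x
  counit_right : ∀ x : C, (TensorProduct.rid A C) ((LinearMap.lTensor C ε) (Δ x)) = x
  mul_compat : Δ ∘ₗ m = (TensorProduct.map m m) ∘ₗ
      (TensorProduct.tensorTensorTensorComm A C C C C).toLinearMap ∘ₗ (TensorProduct.map Δ Δ)
  one_mul : ∀ x : C, m (one ⊗ₜ x) = x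
  mul_one : ∀ x : C, m (x ⊗ₜ one) = x
  mul_assoc : ∀ x y z : C, m (m (x ⊗ₜ y) ⊗ₜ z) = m (x ⊗ₜ m (y ⊗ₜ z))
  Δ_one : Δ one = one ⊗ₜ one
  ε_one : ε one = 1
  ε_mul : ∀ x y : C, ε (m (x ⊗ₜ y)) = ε x * ε y
  Δ_ι : ∀ φ : Φ, Δ (ι φ) = ι φ ⊗ₜ one + one ⊗ₜ ι φ
  ε_ι : ∀ φ : Φ, ε (ι φ) = 0
  p_ι : ∀ φ : Φ, p (ι φ) = φ
  p_one : p one = 0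
  p_mul : ∀ x y : C, p (m (x ⊗ₜ y)) = ε x • p y + ε y • p x
  cofree_coder : ∀ Θ : C →ₗ[A] C, IsCoderivation Δ Θ → p ∘ₗ Θ = 0 → Θ = 0

namespace WedgeBialgebra

variable {A Φ C : Type*} [CommRing A] [AddCommGroup Φ] [Module A Φ]
  [AddCommGroup C] [Module A C] (W : WedgeBialgebra A Φ C)

/-- The lift `h̄ = m ∘ (h ⊗ 1) ∘ Δ : Λ*Φ → Λ*Φ` of `h : Λ*Φ → Φ`. -/
def coderOf (h : C →ₗ[A] Φ) : C →ₗ[A] C :=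
  W.m ∘ₗ (LinearMap.rTensor C (W.ι ∘ₗ h)) ∘ₗ W.Δ

/-- The Gerstenhaber comp operation `f ⊙ g = f ∘ ḡ`. -/
def gcomp (f g : C →ₗ[A] Φ) : C →ₗ[A] Φ := f ∘ₗ W.coderOf g

/-- The Gerstenhaber bracket `[f,g] = f ∘ ḡ − g ∘ f̄` on `Hom(Λ*Φ, Φ)`. -/
def gbracket (f g : C →ₗ[A] Φ) : C →ₗ[A] Φ := W.gcomp f g - W.gcomp g f

end WedgeBialgebra

/-- The wedge word `φ₁ ∧ ⋯ ∧ φ_n ∈ Λ*Φ` of a family of elements of `Φ`. -/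
noncomputable def WedgeBialgebra.wedgeFam {A Φ C : Type*} [CommRing A] [AddCommGroup Φ] [Module A Φ]
  [AddCommGroup C] [Module A C] (W : WedgeBialgebra A Φ C) : ∀ {n : ℕ}, (Fin n → Φ) → C
  | 0, _ => W.one
  | _ + 1, φ => W.m (W.ι (φ 0) ⊗ₜ WedgeBialgebra.wedgeFam W fun i => φ i.succ)

namespace WedgeBialgebra

variable {A Φ C : Type*} [CommRing A] [AddCommGroup Φ] [Module A Φ]
  [AddCommGroup C] [Module A C] (W : WedgeBialgebra A Φ C)

section Parameters

variable {Ξ : Type*} [AddCommGroup Ξ] [Module A Ξ]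

/-- A gauge parameter `ξ ∈ Ξ` viewed as the element of `Hom(Λ*Φ, Ξ)` supported on
the scalars, with value `ξ` at `1`. -/
def constPar (ξ : Ξ) : C →ₗ[A] Ξ := (LinearMap.toSpanSingleton A Ξ ξ) ∘ₗ W.ε

/-- The extension `δ̂(π) = ev ∘ (δ∘π ⊗ 1) ∘ Δ` of `δ : Ξ → Hom(Λ*Φ,Φ)`
to `Hom(Λ*Φ, Ξ)`. -/
def deltaHat (δ : Ξ →ₗ[A] (C →ₗ[A] Φ)) (π : C →ₗ[A] Ξ) : C →ₗ[A] Φ :=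
  (TensorProduct.lift (δ ∘ₗ π)) ∘ₗ W.Δ

/-- The extension `Ĉ(π₁,π₂) = C ∘ ((π₁⊗π₂)⊗1) ∘ (Δ⊗1) ∘ Δ` of the correction term
`C : Ξ ⊗ Ξ → Hom(Λ*Φ,Ξ)`. -/
def cHat (Cm : Ξ →ₗ[A] Ξ →ₗ[A] (C →ₗ[A] Ξ)) (π₁ π₂ : C →ₗ[A] Ξ) : C →ₗ[A] Ξ :=
  (TensorProduct.lift (TensorProduct.lift ((Cm ∘ₗ π₁).compl₂ π₂))) ∘ₗ
    (LinearMap.rTensor C W.Δ) ∘ₗ W.Δ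

/-- The corrected bracket `[π₁,π₂] = π₁⊙δ̂(π₂) − π₂⊙δ̂(π₁) + Ĉ(π₁,π₂)`
on `Hom(Λ*Φ, Ξ)`. -/
def parBracket (δ : Ξ →ₗ[A] (C →ₗ[A] Φ)) (Cm : Ξ →ₗ[A] Ξ →ₗ[A] (C →ₗ[A] Ξ))
    (π₁ π₂ : C →ₗ[A] Ξ) : C →ₗ[A] Ξ :=
  π₁ ∘ₗ W.coderOf (W.deltaHat δ π₂) - π₂ ∘ₗ W.coderOf (W.deltaHat δ π₁) + W.cHat Cm π₁ π₂

end Parameters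

end WedgeBialgebra

variable {A Φ C Ξ : Type*} [CommRing A] [AddCommGroup Φ] [Module A Φ]
  [AddCommGroup C] [Module A C] [AddCommGroup Ξ] [Module A Ξ]

section BBvDAux

open LinearMap

/-- ext principle for maps out of `M ⊗ (N ⊗ P)`. -/
private theorem ext3R {M N P Q : Type*} [AddCommGroup M] [AddCommGroup N] [AddCommGroup P]
    [AddCommGroup Q] [Module A M] [Module A N] [Module A P] [Module A Q]
    {g h : M ⊗[A] (N ⊗[A] P) →ₗ[A] Q}
    (H : ∀ a b c, g (a ⊗ₜ (b ⊗ₜ c)) = h (a ⊗ₜ (b ⊗ₜ c))) : g = h := by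
  apply TensorProduct.ext'
  intro a y
  induction y using TensorProduct.induction_on with
  | zero => simp
  | tmul b c => exact H a b c
  | add u v hu hv => rw [TensorProduct.tmul_add, map_add, map_add, hu, hv]

/-- ext principle for maps out of `M ⊗ (N ⊗ (P ⊗ Q))`. -/
private theorem ext4R {M N P Q S : Type*} [AddCommGroup M] [AddCommGroup N] [AddCommGroup P]
    [AddCommGroup Q] [AddCommGroup S] [Module A M] [Module A N] [Module A P] [Module A Q]
    [Module A S] {g h : M ⊗[A] (N ⊗[A] (P ⊗[A] Q)) →ₗ[A] S}
    (H : ∀ a b c d, g (a ⊗ₜ (b ⊗ₜ (c ⊗ₜ d))) = h (a ⊗ₜ (b ⊗ₜ (c ⊗ₜ d)))) : g = h := by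
  apply ext3R
  intro a b y
  induction y using TensorProduct.induction_on with
  | zero => simp
  | tmul c d => exact H a b c d
  | add u v hu hv =>
      rw [TensorProduct.tmul_add, TensorProduct.tmul_add, map_add, map_add, hu, hv]

private theorem lift_add' {M N P : Type*} [AddCommGroup M] [AddCommGroup N] [AddCommGroup P]
    [Module A M] [Module A N] [Module A P] (f g : M →ₗ[A] N →ₗ[A] P) :
    TensorProduct.lift (f + g) = TensorProduct.lift f + TensorProduct.lift g := by
  apply TensorProduct.ext'; intro a b; simp

private theorem lift_sub' {M N P : Type*} [AddCommGroup M] [AddCommGroup N] [AddCommGroup P]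
    [Module A M] [Module A N] [Module A P] (f g : M →ₗ[A] N →ₗ[A] P) :
    TensorProduct.lift (f - g) = TensorProduct.lift f - TensorProduct.lift g := by
  apply TensorProduct.ext'; intro a b; simp

private theorem lift_smul' {M N P : Type*} [AddCommGroup M] [AddCommGroup N] [AddCommGroup P]
    [Module A M] [Module A N] [Module A P] (s : A) (f : M →ₗ[A] N →ₗ[A] P) :
    TensorProduct.lift (s • f) = s • TensorProduct.lift f := by
  apply TensorProduct.ext'; intro a b; simp

/-- `lift B ∘ (g ⊗ 1) = lift (B ∘ g)`. -/
private theorem lift_comp_rTensor {M M' N P : Type*} [AddCommGroup M] [AddCommGroup M']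
    [AddCommGroup N] [AddCommGroup P] [Module A M] [Module A M'] [Module A N] [Module A P]
    (B : M' →ₗ[A] N →ₗ[A] P) (g : M →ₗ[A] M') :
    TensorProduct.lift B ∘ₗ rTensor N g = TensorProduct.lift (B ∘ₗ g) := by
  apply TensorProduct.ext'; intro a b; simp

namespace WedgeBialgebra

variable (W : WedgeBialgebra A Φ C)

private theorem coderOf_add (h₁ h₂ : C →ₗ[A] Φ) :
    W.coderOf (h₁ + h₂) = W.coderOf h₁ + W.coderOf h₂ := by
  simp [WedgeBialgebra.coderOf, comp_add, rTensor_add, add_comp]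

private theorem coderOf_smul (s : A) (h : C →ₗ[A] Φ) :
    W.coderOf (s • h) = s • W.coderOf h := by
  simp [WedgeBialgebra.coderOf, comp_smul, rTensor_smul, smul_comp]

/-- **Lemma 1**: the lift `h̄` of any `h : Λ*Φ → Φ` is a coderivation. -/
theorem coderOf_isCoderivation (h : C →ₗ[A] Φ) :
    W.Δ ∘ₗ W.coderOf h = (rTensor C (W.coderOf h) + lTensor C (W.coderOf h)) ∘ₗ W.Δ := by
  set f : C →ₗ[A] C := W.ι ∘ₗ h with hf
  set r₁ : C →ₗ[A] C ⊗[A] C := (TensorProduct.mk A C C).flip W.one with hr₁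
  set l₁ : C →ₗ[A] C ⊗[A] C := TensorProduct.mk A C C W.one with hl₁
  set ttt := (TensorProduct.tensorTensorTensorComm A C C C C).toLinearMap with httt
  set Z₁ : C ⊗[A] (C ⊗[A] C) →ₗ[A] C ⊗[A] C :=
    TensorProduct.map W.m W.m ∘ₗ ttt ∘ₗ rTensor (C ⊗[A] C) (r₁ ∘ₗ f) with hZ₁
  set Z₂ : C ⊗[A] (C ⊗[A] C) →ₗ[A] C ⊗[A] C :=
    TensorProduct.map W.m W.m ∘ₗ ttt ∘ₗ rTensor (C ⊗[A] C) (l₁ ∘ₗ f) with hZ₂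
  have hsplit : (TensorProduct.map W.m W.m ∘ₗ ttt ∘ₗ TensorProduct.map W.Δ W.Δ) ∘ₗ
      rTensor C f = Z₁ ∘ₗ lTensor C W.Δ + Z₂ ∘ₗ lTensor C W.Δ := by
    apply TensorProduct.ext'
    intro a b
    simp only [comp_apply, LinearMap.add_apply, rTensor_tmul, lTensor_tmul, TensorProduct.map_tmul,
      hZ₁, hZ₂, hf]
    rw [W.Δ_ι]
    generalize W.Δ b = t
    induction t using TensorProduct.induction_on with
    | zero => simp
    | tmul c d =>
        simp [httt, hr₁, hl₁, TensorProduct.add_tmul, W.one_mul, TensorProduct.mk_apply]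
    | add u v hu hv => simp only [TensorProduct.tmul_add, map_add, hu, hv]; abel
  have P1 : Z₁ ∘ₗ (TensorProduct.assoc A C C C).toLinearMap
      = rTensor C (W.m ∘ₗ rTensor C f) := by
    apply TensorProduct.ext_threefold
    intro a b c
    simp [hZ₁, httt, hr₁, W.one_mul]
  have P2 : Z₂ ∘ₗ (TensorProduct.assoc A C C C).toLinearMap
      = lTensor C (W.m ∘ₗ rTensor C f) ∘ₗ (TensorProduct.assoc A C C C).toLinearMap ∘ₗ
        rTensor C (TensorProduct.comm A C C).toLinearMap := by
    apply TensorProduct.ext_threefold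
    intro a b c
    simp [hZ₂, httt, hl₁, W.one_mul]
  ext x
  have hco := LinearMap.congr_fun W.coassoc x
  simp only [comp_apply, LinearEquiv.coe_coe] at hco
  have hcc : rTensor C (TensorProduct.comm A C C).toLinearMap
      (rTensor C W.Δ (W.Δ x)) = rTensor C W.Δ (W.Δ x) := by
    rw [← comp_apply, ← rTensor_comp, W.cocomm]
  have hm := LinearMap.congr_fun W.mul_compat (rTensor C f (W.Δ x))
  simp only [comp_apply, LinearEquiv.coe_coe] at hm
  have hlhs : W.Δ (W.coderOf h x)
      = Z₁ (lTensor C W.Δ (W.Δ x)) + Z₂ (lTensor C W.Δ (W.Δ x)) := by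
    have := LinearMap.congr_fun hsplit (W.Δ x)
    simp only [comp_apply, LinearMap.add_apply] at this
    calc W.Δ (W.coderOf h x)
        = W.Δ (W.m (rTensor C f (W.Δ x))) := rfl
      _ = TensorProduct.map W.m W.m (ttt (TensorProduct.map W.Δ W.Δ (rTensor C f (W.Δ x)))) := hm
      _ = Z₁ (lTensor C W.Δ (W.Δ x)) + Z₂ (lTensor C W.Δ (W.Δ x)) := this
  have h1 : Z₁ (lTensor C W.Δ (W.Δ x)) = rTensor C (W.coderOf h) (W.Δ x) := by
    rw [← hco, ← LinearEquiv.coe_coe, ← comp_apply, P1, ← comp_apply, ← rTensor_comp]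
    rfl
  have h2 : Z₂ (lTensor C W.Δ (W.Δ x)) = lTensor C (W.coderOf h) (W.Δ x) := by
    rw [← hco, ← LinearEquiv.coe_coe, ← comp_apply, P2]
    simp only [comp_apply, LinearEquiv.coe_coe]
    rw [hcc, hco, ← comp_apply, ← lTensor_comp]
    rfl
  simp only [comp_apply, LinearMap.add_apply, hlhs, h1, h2]

/-- The trilinear map `(a, b) ↦ B₁ a ∘ (δ(π₂ b))‾`. -/
private def Rmap (B₁ B₂ : C →ₗ[A] C →ₗ[A] Φ) : C →ₗ[A] C →ₗ[A] (C →ₗ[A] Φ) :=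
  LinearMap.mk₂ A (fun a b => B₁ a ∘ₗ W.coderOf (B₂ b))
    (fun a a' b => by simp [add_comp])
    (fun s a b => by simp [smul_comp])
    (fun a b b' => by simp [map_add, W.coderOf_add, comp_add])
    (fun s a b => by simp [map_smul, W.coderOf_smul, comp_smul])

private def SmapCore (B₁ B₂ : C →ₗ[A] C →ₗ[A] Φ) :
    C →ₗ[A] C →ₗ[A] (C ⊗[A] C →ₗ[A] Φ) :=
  LinearMap.mk₂ A (fun a b => B₁ a ∘ₗ W.m ∘ₗ rTensor C (W.ι ∘ₗ B₂ b))
    (fun a a' b => by simp [add_comp])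
    (fun s a b => by simp [smul_comp])
    (fun a b b' => by simp [map_add, comp_add, rTensor_add, add_comp])
    (fun s a b => by simp [map_smul, comp_smul, rTensor_smul, smul_comp])

private def Tmap (δ : Ξ →ₗ[A] (C →ₗ[A] Φ)) (Cm : Ξ →ₗ[A] Ξ →ₗ[A] (C →ₗ[A] Ξ))
    (π₁ π₂ : C →ₗ[A] Ξ) : C →ₗ[A] C →ₗ[A] (C →ₗ[A] Φ) :=
  LinearMap.mk₂ A (fun a b => TensorProduct.lift (δ ∘ₗ Cm (π₁ a) (π₂ b)) ∘ₗ W.Δ)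
    (fun a a' b => by
      simp [map_add, LinearMap.add_apply, comp_add, lift_add', add_comp])
    (fun s a b => by
      simp [map_smul, LinearMap.smul_apply, comp_smul, smul_comp, lift_smul'])
    (fun a b b' => by
      simp [map_add, comp_add, lift_add', add_comp])
    (fun s a b => by
      simp [map_smul, comp_smul, smul_comp, lift_smul'])

private def Umap (δ : Ξ →ₗ[A] (C →ₗ[A] Φ)) (Cm : Ξ →ₗ[A] Ξ →ₗ[A] (C →ₗ[A] Ξ))
    (π₁ π₂ : C →ₗ[A] Ξ) : C →ₗ[A] C →ₗ[A] (C ⊗[A] C →ₗ[A] Φ) :=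
  LinearMap.mk₂ A (fun a b => TensorProduct.lift (δ ∘ₗ Cm (π₁ a) (π₂ b)))
    (fun a a' b => by simp [map_add, comp_add, lift_add'])
    (fun s a b => by simp [map_smul, comp_smul, lift_smul'])
    (fun a b b' => by simp [map_add, comp_add, lift_add'])
    (fun s a b => by simp [map_smul, comp_smul, lift_smul'])

/-- Bridge via coassociativity: `(1⊗1⊗Δ)(Δ⊗1)Δ = α⁻¹(1⊗(1⊗Δ))(1⊗Δ)Δ`. -/
private theorem bridge1 : lTensor (C ⊗[A] C) W.Δ ∘ₗ rTensor C W.Δ ∘ₗ W.Δ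
    = (TensorProduct.assoc A C C (C ⊗[A] C)).symm.toLinearMap ∘ₗ
      lTensor C (lTensor C W.Δ) ∘ₗ lTensor C W.Δ ∘ₗ W.Δ := by
  have base := TensorProduct.map_map_comp_assoc_eq (R := A)
    (LinearMap.id : C →ₗ[A] C) (LinearMap.id : C →ₗ[A] C) W.Δ
  ext x
  have hco := LinearMap.congr_fun W.coassoc x
  simp only [comp_apply, LinearEquiv.coe_coe] at hco ⊢
  set y := lTensor C W.Δ (W.Δ x) with hy
  have h2 : rTensor C W.Δ (W.Δ x) = (TensorProduct.assoc A C C C).symm y := by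
    rw [← hco]; simp
  rw [h2]
  have hb := LinearMap.congr_fun base ((TensorProduct.assoc A C C C).symm y)
  simp only [comp_apply, LinearEquiv.coe_coe, LinearEquiv.apply_symm_apply,
    TensorProduct.map_id, LinearMap.lTensor, LinearMap.rTensor] at hb ⊢
  rw [hb]
  simp

/-- Bridge via coassociativity: `(1⊗1⊗Δ)(Δ⊗1)Δ = α(Δ⊗1⊗1)(Δ⊗1)Δ`. -/
private theorem bridge2 : lTensor (C ⊗[A] C) W.Δ ∘ₗ rTensor C W.Δ ∘ₗ W.Δ
    = (TensorProduct.assoc A (C ⊗[A] C) C C).toLinearMap ∘ₗ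
      rTensor C (rTensor C W.Δ) ∘ₗ rTensor C W.Δ ∘ₗ W.Δ := by
  have base := TensorProduct.map_map_comp_assoc_eq (R := A)
    W.Δ (LinearMap.id : C →ₗ[A] C) (LinearMap.id : C →ₗ[A] C)
  ext x
  have hco := LinearMap.congr_fun W.coassoc x
  simp only [comp_apply, LinearEquiv.coe_coe] at hco ⊢
  have hswap : lTensor (C ⊗[A] C) W.Δ (rTensor C W.Δ (W.Δ x))
      = rTensor (C ⊗[A] C) W.Δ (lTensor C W.Δ (W.Δ x)) := by
    rw [← comp_apply, lTensor_comp_rTensor, ← rTensor_comp_lTensor, comp_apply]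
  rw [hswap, ← hco]
  have hb := LinearMap.congr_fun base (rTensor C W.Δ (W.Δ x))
  simp only [comp_apply, LinearEquiv.coe_coe, TensorProduct.map_id,
    LinearMap.lTensor, LinearMap.rTensor] at hb ⊢
  rw [hb]

/-- Cocommutativity lets us flip the two outer Sweedler legs. -/
private theorem flip_liftlift (Q : C →ₗ[A] C →ₗ[A] (C →ₗ[A] Φ)) :
    TensorProduct.lift (TensorProduct.lift Q) ∘ₗ rTensor C W.Δ ∘ₗ W.Δ
      = TensorProduct.lift (TensorProduct.lift Q.flip) ∘ₗ rTensor C W.Δ ∘ₗ W.Δ := by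
  have hpure : TensorProduct.lift (TensorProduct.lift Q) ∘ₗ
      rTensor C (TensorProduct.comm A C C).toLinearMap
      = TensorProduct.lift (TensorProduct.lift Q.flip) := by
    apply TensorProduct.ext_threefold
    intro a b c
    simp
  ext x
  have hcc : rTensor C (TensorProduct.comm A C C).toLinearMap
      (rTensor C W.Δ (W.Δ x)) = rTensor C W.Δ (W.Δ x) := by
    rw [← comp_apply, ← rTensor_comp, W.cocomm]
  simp only [comp_apply]
  rw [← hpure]
  simp only [comp_apply]
  rw [hcc]

/-- **Lemma 2**: identification of the cross term. -/
private theorem cross_term (B₁ B₂ : C →ₗ[A] C →ₗ[A] Φ) :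
    TensorProduct.lift B₁ ∘ₗ lTensor C (W.coderOf (TensorProduct.lift B₂ ∘ₗ W.Δ)) ∘ₗ W.Δ
      = TensorProduct.lift (TensorProduct.lift (W.Rmap B₁ B₂)) ∘ₗ rTensor C W.Δ ∘ₗ W.Δ := by
  set G : C ⊗[A] (C ⊗[A] C) →ₗ[A] C :=
    W.m ∘ₗ rTensor C (W.ι ∘ₗ TensorProduct.lift B₂) ∘ₗ
      (TensorProduct.assoc A C C C).symm.toLinearMap with hGdef
  have hG : W.coderOf (TensorProduct.lift B₂ ∘ₗ W.Δ)
      = G ∘ₗ lTensor C W.Δ ∘ₗ W.Δ := by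
    ext y
    have hco := LinearMap.congr_fun W.coassoc y
    simp only [comp_apply, LinearEquiv.coe_coe] at hco
    have h1 : rTensor C (W.ι ∘ₗ (TensorProduct.lift B₂ ∘ₗ W.Δ))
        = rTensor C (W.ι ∘ₗ TensorProduct.lift B₂) ∘ₗ rTensor C W.Δ := by
      rw [← LinearMap.comp_assoc, rTensor_comp]
    have h2 : rTensor C W.Δ (W.Δ y) =
        (TensorProduct.assoc A C C C).symm (lTensor C W.Δ (W.Δ y)) := by
      rw [← hco]; simp
    show W.m (rTensor C (W.ι ∘ₗ (TensorProduct.lift B₂ ∘ₗ W.Δ)) (W.Δ y)) = _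
    rw [h1]
    simp only [comp_apply]
    rw [h2]
    simp [hGdef]
  have hext : TensorProduct.lift (TensorProduct.lift (W.Rmap B₁ B₂))
      = TensorProduct.lift (TensorProduct.lift (W.SmapCore B₁ B₂)) ∘ₗ
        lTensor (C ⊗[A] C) W.Δ := by
    apply TensorProduct.ext_threefold
    intro a b c
    simp only [comp_apply, lTensor_tmul, TensorProduct.lift.tmul,
      WedgeBialgebra.Rmap, LinearMap.mk₂_apply, WedgeBialgebra.coderOf]
    generalize W.Δ c = t
    induction t using TensorProduct.induction_on with
    | zero => simp
    | tmul u v => simp [WedgeBialgebra.SmapCore]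
    | add u v hu hv => simp only [TensorProduct.tmul_add, map_add, hu, hv]
  have hfinal : TensorProduct.lift B₁ ∘ₗ lTensor C G
      = TensorProduct.lift (TensorProduct.lift (W.SmapCore B₁ B₂)) ∘ₗ
        (TensorProduct.assoc A C C (C ⊗[A] C)).symm.toLinearMap := by
    apply ext4R
    intro a b c d
    simp [hGdef, WedgeBialgebra.SmapCore]
  ext x
  have hb1 := LinearMap.congr_fun W.bridge1 x
  simp only [comp_apply, LinearEquiv.coe_coe] at hb1 ⊢
  rw [hG]
  have hGx : lTensor C (G ∘ₗ lTensor C W.Δ ∘ₗ W.Δ) (W.Δ x)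
      = lTensor C G (lTensor C (lTensor C W.Δ) (lTensor C W.Δ (W.Δ x))) := by
    simp only [lTensor_comp, comp_apply]
  rw [hGx]
  rw [LinearMap.congr_fun hext (rTensor C W.Δ (W.Δ x))]
  simp only [comp_apply]
  rw [hb1]
  have := LinearMap.congr_fun hfinal
    (x := lTensor C (lTensor C W.Δ) (lTensor C W.Δ (W.Δ x)))
  simp only [comp_apply, LinearEquiv.coe_coe] at this
  rw [this]

/-- **Lemma 3**: the corrected term assembles to `δ̂(Ĉ(π₁,π₂))`. -/
private theorem final_term (δ : Ξ →ₗ[A] (C →ₗ[A] Φ)) (Cm : Ξ →ₗ[A] Ξ →ₗ[A] (C →ₗ[A] Ξ))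
    (π₁ π₂ : C →ₗ[A] Ξ) :
    TensorProduct.lift (TensorProduct.lift (W.Tmap δ Cm π₁ π₂)) ∘ₗ rTensor C W.Δ ∘ₗ W.Δ
      = W.deltaHat δ (W.cHat Cm π₁ π₂) := by
  have hext2 : TensorProduct.lift (TensorProduct.lift (W.Tmap δ Cm π₁ π₂))
      = TensorProduct.lift (TensorProduct.lift (Umap δ Cm π₁ π₂)) ∘ₗ
        lTensor (C ⊗[A] C) W.Δ := by
    apply TensorProduct.ext_threefold
    intro a b c
    simp only [comp_apply, lTensor_tmul, TensorProduct.lift.tmul,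
      WedgeBialgebra.Tmap, LinearMap.mk₂_apply]
    generalize W.Δ c = t
    induction t using TensorProduct.induction_on with
    | zero => simp
    | tmul u v => simp [WedgeBialgebra.Umap]
    | add u v hu hv => simp only [TensorProduct.tmul_add, map_add, hu, hv]
  have hfinal2 : TensorProduct.lift (TensorProduct.lift (Umap δ Cm π₁ π₂)) ∘ₗ
      (TensorProduct.assoc A (C ⊗[A] C) C C).toLinearMap
      = TensorProduct.lift (δ ∘ₗ TensorProduct.lift (TensorProduct.lift
          ((Cm ∘ₗ π₁).compl₂ π₂))) := by
    apply TensorProduct.ext_fourfold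
    intro a b c d
    simp [WedgeBialgebra.Umap]
  have hRHS : W.deltaHat δ (W.cHat Cm π₁ π₂)
      = TensorProduct.lift (δ ∘ₗ TensorProduct.lift (TensorProduct.lift
          ((Cm ∘ₗ π₁).compl₂ π₂))) ∘ₗ (rTensor C (rTensor C W.Δ) ∘ₗ rTensor C W.Δ) ∘ₗ W.Δ := by
    show TensorProduct.lift (δ ∘ₗ (TensorProduct.lift (TensorProduct.lift
        ((Cm ∘ₗ π₁).compl₂ π₂)) ∘ₗ (rTensor C W.Δ ∘ₗ W.Δ))) ∘ₗ W.Δ = _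
    rw [← LinearMap.comp_assoc, ← lift_comp_rTensor, rTensor_comp]
    rfl
  ext x
  have hb2 := LinearMap.congr_fun W.bridge2 x
  simp only [comp_apply, LinearEquiv.coe_coe] at hb2 ⊢
  rw [LinearMap.congr_fun hext2 (rTensor C W.Δ (W.Δ x))]
  simp only [comp_apply]
  rw [hb2, LinearMap.congr_fun hRHS x]
  have := LinearMap.congr_fun hfinal2
    (x := rTensor C (rTensor C W.Δ) (rTensor C W.Δ (W.Δ x)))
  simp only [comp_apply, LinearEquiv.coe_coe] at this ⊢
  rw [this]

end WedgeBialgebra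

end BBvDAux

/-- Under the BBvD hypothesis, the map `δ̂` preserves brackets:
`δ̂([π₁,π₂]) = [δ̂(π₁), δ̂(π₂)]` in the Gerstenhaber Lie algebra `Hom(Λ*Φ,Φ)`. -/
theorem deltaHat_preserves_brackets (W : WedgeBialgebra A Φ C)
    (δ : Ξ →ₗ[A] (C →ₗ[A] Φ)) (Cm : Ξ →ₗ[A] Ξ →ₗ[A] (C →ₗ[A] Ξ))
    (hBBvD : ∀ ξ η : Ξ, W.gbracket (δ ξ) (δ η) = W.deltaHat δ (Cm ξ η)) :
    ∀ π₁ π₂ : C →ₗ[A] Ξ,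
      W.deltaHat δ (W.parBracket δ Cm π₁ π₂) =
        W.gbracket (W.deltaHat δ π₁) (W.deltaHat δ π₂) := by
  intro π₁ π₂
  have hA : ∀ σ τ : C →ₗ[A] Ξ,
      W.deltaHat δ σ ∘ₗ W.coderOf (W.deltaHat δ τ)
        = W.deltaHat δ (σ ∘ₗ W.coderOf (W.deltaHat δ τ))
          + TensorProduct.lift (TensorProduct.lift (W.Rmap (δ ∘ₗ σ) (δ ∘ₗ τ))) ∘ₗ
              LinearMap.rTensor C W.Δ ∘ₗ W.Δ := by
    intro σ τ
    have hcod := W.coderOf_isCoderivation (W.deltaHat δ τ)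
    have hcross := W.cross_term (δ ∘ₗ σ) (δ ∘ₗ τ)
    ext x
    have h1 := LinearMap.congr_fun hcod x
    simp only [LinearMap.comp_apply, LinearMap.add_apply] at h1 ⊢
    show TensorProduct.lift (δ ∘ₗ σ) (W.Δ (W.coderOf (W.deltaHat δ τ) x)) = _
    rw [h1, map_add]
    congr 1
    · rw [← LinearMap.comp_apply (TensorProduct.lift (δ ∘ₗ σ)), lift_comp_rTensor]
      rfl
    · have h2 := LinearMap.congr_fun hcross x
      simp only [LinearMap.comp_apply] at h2
      exact h2
  have hA₁ := hA π₁ π₂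
  have hA₂ := hA π₂ π₁
  have hflip := W.flip_liftlift (W.Rmap (δ ∘ₗ π₂) (δ ∘ₗ π₁))
  have hT : W.Rmap (δ ∘ₗ π₁) (δ ∘ₗ π₂) - (W.Rmap (δ ∘ₗ π₂) (δ ∘ₗ π₁)).flip
      = W.Tmap δ Cm π₁ π₂ := by
    apply LinearMap.ext; intro a
    apply LinearMap.ext; intro b
    have h := hBBvD (π₁ a) (π₂ b)
    simp only [WedgeBialgebra.gbracket, WedgeBialgebra.gcomp, WedgeBialgebra.deltaHat] at h
    simp only [LinearMap.sub_apply, LinearMap.flip_apply, WedgeBialgebra.Rmap,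
      WedgeBialgebra.Tmap, LinearMap.mk₂_apply, LinearMap.comp_apply]
    exact h
  have hkey : W.deltaHat δ (W.cHat Cm π₁ π₂)
      = TensorProduct.lift (TensorProduct.lift (W.Rmap (δ ∘ₗ π₁) (δ ∘ₗ π₂))) ∘ₗ
          LinearMap.rTensor C W.Δ ∘ₗ W.Δ
        - TensorProduct.lift (TensorProduct.lift ((W.Rmap (δ ∘ₗ π₂) (δ ∘ₗ π₁)).flip)) ∘ₗ
          LinearMap.rTensor C W.Δ ∘ₗ W.Δ := by
    rw [← W.final_term δ Cm π₁ π₂, ← hT, lift_sub', lift_sub', LinearMap.sub_comp]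
  have hgoal : W.deltaHat δ (W.parBracket δ Cm π₁ π₂)
      = W.deltaHat δ (π₁ ∘ₗ W.coderOf (W.deltaHat δ π₂))
        - W.deltaHat δ (π₂ ∘ₗ W.coderOf (W.deltaHat δ π₁))
        + W.deltaHat δ (W.cHat Cm π₁ π₂) := by
    simp only [WedgeBialgebra.deltaHat, WedgeBialgebra.parBracket, LinearMap.comp_add,
      LinearMap.comp_sub, lift_add', lift_sub', LinearMap.add_comp, LinearMap.sub_comp]
  show _ = W.deltaHat δ π₁ ∘ₗ W.coderOf (W.deltaHat δ π₂)
      - W.deltaHat δ π₂ ∘ₗ W.coderOf (W.deltaHat δ π₁)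
  rw [hgoal, hA₁, hA₂, hkey, hflip]
  abel
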